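/- Let H be a compactly generated, locally compact, nilpotent group, and let 𝓛 be a collection of closed subgroups of H such that the subgroup generated by the union of the members of 𝓛 is dense in H. Then, for some n, there exist L₁, …, Lₙ ∈ 𝓛 and a compact subset C of H such that C L₁ L₂ ⋯ Lₙ = H. -/

import Mathlib

open scoped Pointwise

/-- A `(Q, ε)`-invariant vector for a representation `π`. -/
def IsInvVec {G : Type*} [Group G] {𝓗 : Type*} [NormedAddCommGroup 𝓗]
    [InnerProductSpace ℂ 𝓗] (π : G →* (𝓗 ≃ₗᵢ[ℂ] 𝓗)) (Q : Set G) (ε : ℝ) (ξ : 𝓗) : Prop :=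
  ∀ g ∈ Q, ‖π g ξ - ξ‖ ≤ ε * ‖ξ‖

/-- A unitary representation: a homomorphism into the unitary group of a complex Hilbert
space that is continuous in the strong operator topology. -/
def IsUnitaryRep {G : Type*} [Group G] [TopologicalSpace G] {𝓗 : Type*}
    [NormedAddCommGroup 𝓗] [InnerProductSpace ℂ 𝓗] (π : G →* (𝓗 ≃ₗᵢ[ℂ] 𝓗)) : Prop :=
  ∀ ξ : 𝓗, Continuous fun g => π g ξ

/-- Relative Property (T) for a pair `(G, M)`, where `M` is a subset of `G`: every unitary
representation of `G` with almost-invariant vectors has a nonzero `M`-invariant vector. -/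
def RelPropT (G : Type*) [Group G] [TopologicalSpace G] (M : Set G) : Prop :=
  ∀ (𝓗 : Type) (_ : NormedAddCommGroup 𝓗) (_ : InnerProductSpace ℂ 𝓗)
    (_ : CompleteSpace 𝓗) (_ : SecondCountableTopology 𝓗)
    (π : G →* (𝓗 ≃ₗᵢ[ℂ] 𝓗)), IsUnitaryRep π →
    (∀ Q : Set G, IsCompact Q → ∀ ε : ℝ, 0 < ε → ∃ ξ : 𝓗, ξ ≠ 0 ∧ IsInvVec π Q ε ξ) →
    ∃ ξ : 𝓗, ξ ≠ 0 ∧ ∀ m ∈ M, π m ξ = ξ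

/-- Relative Property (T) for a triple `(G, H, M)`: every unitary representation of `G` whose
restriction to `H` has almost-invariant vectors has a nonzero `M`-invariant vector. -/
def RelPropT₃ (G : Type*) [Group G] [TopologicalSpace G] (H M : Set G) : Prop :=
  ∀ (𝓗 : Type) (_ : NormedAddCommGroup 𝓗) (_ : InnerProductSpace ℂ 𝓗)
    (_ : CompleteSpace 𝓗) (_ : SecondCountableTopology 𝓗)
    (π : G →* (𝓗 ≃ₗᵢ[ℂ] 𝓗)), IsUnitaryRep π →
    (∀ Q : Set G, Q ⊆ H → IsCompact Q → ∀ ε : ℝ, 0 < ε → ∃ ξ : 𝓗, ξ ≠ 0 ∧ IsInvVec π Q ε ξ) →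
    ∃ ξ : 𝓗, ξ ≠ 0 ∧ ∀ m ∈ M, π m ξ = ξ

/-- Relative Property (T) with approximation for a triple `(G, H, M)`. -/
def RelPropT₃Approx (G : Type*) [Group G] [TopologicalSpace G] (H M : Set G) : Prop :=
  ∀ δ : ℝ, 0 < δ → ∃ Q : Set G, Q ⊆ H ∧ IsCompact Q ∧ ∃ ε : ℝ, 0 < ε ∧
    ∀ (𝓗 : Type) (_ : NormedAddCommGroup 𝓗) (_ : InnerProductSpace ℂ 𝓗)
      (_ : CompleteSpace 𝓗) (_ : SecondCountableTopology 𝓗)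
      (π : G →* (𝓗 ≃ₗᵢ[ℂ] 𝓗)), IsUnitaryRep π → ∀ ξ : 𝓗, IsInvVec π Q ε ξ →
      ∃ η : 𝓗, (∀ m ∈ M, π m η = η) ∧ ‖ξ - η‖ ≤ δ * ‖ξ‖

/-- The closure of the commutator subgroup of a subgroup `N` of `G`, as a subgroup of `G`:
this is `N⁽¹⁾`. -/
def Subgroup.commClosure {G : Type*} [Group G] [TopologicalSpace G] [IsTopologicalGroup G]
    (N : Subgroup G) : Subgroup G :=
  (⁅N, N⁆ : Subgroup G).topologicalClosure

instance {G : Type*} [Group G] [TopologicalSpace G] [IsTopologicalGroup G]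
    (N : Subgroup G) [N.Normal] : N.commClosure.Normal :=
  Subgroup.is_normal_topologicalClosure _

instance commClosNormal {G : Type*} [Group G] [TopologicalSpace G] [IsTopologicalGroup G] :
    (commutator G).topologicalClosure.Normal :=
  Subgroup.is_normal_topologicalClosure _
set_option linter.unusedSectionVars false
open scoped commutatorElement
set_option maxHeartbeats 1000000


section Algebra

variable {H : Type*} [Group H]

/-- Relative lower central series of a subgroup `D`. -/
def relLCS (D : Subgroup H) : ℕ → Subgroup H
  | 0 => D
  | n + 1 => ⁅relLCS D n, D⁆

@[simp] lemma relLCS_zero (D : Subgroup H) : relLCS D 0 = D := rfl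
lemma relLCS_succ (D : Subgroup H) (n : ℕ) : relLCS D (n+1) = ⁅relLCS D n, D⁆ := rfl

lemma relLCS_top_eq (n : ℕ) : relLCS (⊤ : Subgroup H) n = lowerCentralSeries (⊤ : Subgroup H) n := by
  induction n with
  | zero => rfl
  | succ n ih => rw [relLCS_succ, ih]; rfl

lemma relLCS_le_self (D : Subgroup H) (n : ℕ) : relLCS D n ≤ D := by
  induction n with
  | zero => exact le_rfl
  | succ n ih =>
    rw [relLCS_succ]
    exact Subgroup.commutator_le.mpr fun g₁ h₁ g₂ h₂ => by
      exact Subgroup.mul_mem _ (Subgroup.mul_mem _ (Subgroup.mul_mem _ (ih h₁) h₂)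
        (Subgroup.inv_mem _ (ih h₁))) (Subgroup.inv_mem _ h₂)

lemma relLCS_succ_le (D : Subgroup H) (n : ℕ) : relLCS D (n+1) ≤ relLCS D n := by
  induction n with
  | zero => exact relLCS_le_self D 1
  | succ n ih => exact Subgroup.commutator_mono ih le_rfl

lemma relLCS_le_of_le (D : Subgroup H) {n m : ℕ} (h : n ≤ m) : relLCS D m ≤ relLCS D n := by
  induction m with
  | zero => simp_all
  | succ m ih =>
    rcases Nat.lt_or_ge n (m+1) with h' | h'
    · exact (relLCS_succ_le D m).trans (ih (Nat.lt_succ_iff.mp h'))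
    · have : n = m + 1 := le_antisymm h h'
      subst this; exact le_rfl

lemma relLCS_mono {D E : Subgroup H} (h : D ≤ E) (n : ℕ) : relLCS D n ≤ relLCS E n := by
  induction n with
  | zero => exact h
  | succ n ih => exact Subgroup.commutator_mono ih h

/-- `γ` notation for the absolute lower central series. -/
abbrev gam (H : Type*) [Group H] (n : ℕ) : Subgroup H := relLCS (⊤ : Subgroup H) n

lemma comm_mem_gam {n : ℕ} {a : H} (ha : a ∈ gam H n) (b : H) : ⁅a, b⁆ ∈ gam H (n+1) :=
  Subgroup.commutator_mem_commutator ha (Subgroup.mem_top b)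

lemma comm_mem_gam' {n : ℕ} {a : H} (ha : a ∈ gam H n) (b : H) : ⁅b, a⁆ ∈ gam H (n+1) := by
  have := comm_mem_gam ha b
  rw [← commutatorElement_inv] at this
  exact (Subgroup.inv_mem_iff _).mp this

lemma gam_succ_le (n : ℕ) : gam H (n+1) ≤ gam H n := relLCS_succ_le ⊤ n

/-- Iterated commutator sets of a generating set. -/
def commSet (X : Set H) : ℕ → Set H
  | 0 => X
  | n + 1 => Set.image2 (fun a x => ⁅a, x⁆) (commSet X n) X

lemma commSet_subset_relLCS (X : Set H) (n : ℕ) :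
    commSet X n ⊆ (relLCS (Subgroup.closure X) n : Set H) := by
  induction n with
  | zero => exact Subgroup.subset_closure
  | succ n ih =>
    rintro g ⟨a, ha, x, hx, rfl⟩
    exact Subgroup.commutator_mem_commutator (ih ha) (Subgroup.subset_closure hx)

/-- Key generation lemma: the relative lower central series of `closure X` is generated by
iterated commutators of elements of `X`, modulo the next term. -/
lemma relLCS_le_commSet_sup (X : Set H) (n : ℕ) :
    relLCS (Subgroup.closure X) n ≤
      Subgroup.closure (commSet X n) ⊔ relLCS (Subgroup.closure X) (n+1) := by
  induction n with
  | zero => exact le_sup_of_le_left le_rfl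
  | succ n ih =>
    set D := Subgroup.closure X with hD
    set T : Subgroup H := Subgroup.closure (commSet X (n+1)) ⊔ relLCS D (n+2) with hT
    -- enough: ∀ u ∈ relLCS D n, d ∈ D, ⁅u,d⁆ ∈ T
    rw [relLCS_succ]
    -- conjugation stability : for z ∈ relLCS D (n+1) ∩ T and a ∈ D, a z a⁻¹ ∈ T ∩ relLCS D (n+1)
    have hconj : ∀ z ∈ T, z ∈ relLCS D (n+1) → ∀ a ∈ D, a * z * a⁻¹ ∈ T ∧
        a * z * a⁻¹ ∈ relLCS D (n+1) := by
      intro z hzT hz a ha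
      have h1 : a * z * a⁻¹ = z * ⁅z⁻¹, a⁆ := by group
      have h2 : ⁅z⁻¹, a⁆ ∈ relLCS D (n+2) :=
        Subgroup.commutator_mem_commutator (Subgroup.inv_mem _ hz) ha
      constructor
      · rw [h1]; exact mul_mem hzT (le_sup_right (a := Subgroup.closure (commSet X (n+1))) h2)
      · rw [h1]; exact mul_mem hz (relLCS_succ_le D (n+1) h2)
    -- commutators of commSet elements with D land in T
    have hbase : ∀ g ∈ commSet X n, g ∈ relLCS D n → ∀ d ∈ D, ⁅g, d⁆ ∈ T := by
      intro g hg hgn d hd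
      induction hd using Subgroup.closure_induction with
      | mem x hx =>
        exact le_sup_left (a := Subgroup.closure (commSet X (n+1)))
          (Subgroup.subset_closure ⟨g, hg, x, hx, rfl⟩)
      | one => simpa using (Subgroup.one_mem T)
      | mul d e hd' he' ihd ihe =>
        have hge : ⁅g, e⁆ ∈ relLCS D (n+1) := Subgroup.commutator_mem_commutator hgn he'
        have : ⁅g, d*e⁆ = ⁅g,d⁆ * (d * ⁅g,e⁆ * d⁻¹) := by group
        rw [this]
        exact mul_mem ihd ((hconj _ ihe hge d hd').1)
      | inv d hd' ihd =>
        have hgd : ⁅g, d⁆ ∈ relLCS D (n+1) := Subgroup.commutator_mem_commutator hgn hd'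
        have : ⁅g, d⁻¹⁆ = d⁻¹ * ⁅g,d⁆⁻¹ * (d⁻¹)⁻¹ := by group
        rw [this]
        exact (hconj _ (inv_mem ihd) (inv_mem hgd) d⁻¹ (inv_mem hd')).1
    -- the set P of elements u of relLCS D n s.t. ∀ d ∈ D, ⁅u,d⁆ ∈ T is a subgroup
    let P : Subgroup H :=
      { carrier := {u | u ∈ relLCS D n ∧ ∀ d ∈ D, ⁅u, d⁆ ∈ T}
        one_mem' := ⟨Subgroup.one_mem _, fun d _ => by
          have : ⁅(1:H), d⁆ = 1 := by group
          rw [this]; exact Subgroup.one_mem T⟩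
        mul_mem' := by
          rintro u v ⟨hun, hu⟩ ⟨hvn, hv⟩
          refine ⟨mul_mem hun hvn, fun d hd => ?_⟩
          have hid : ⁅u*v, d⁆ = u * ⁅v,d⁆ * u⁻¹ * ⁅u,d⁆ := by group
          rw [hid]
          have hvd : ⁅v,d⁆ ∈ relLCS D (n+1) := Subgroup.commutator_mem_commutator hvn hd
          exact mul_mem ((hconj _ (hv d hd) hvd u (relLCS_le_self D n hun)).1) (hu d hd)
        inv_mem' := by
          rintro u ⟨hun, hu⟩
          refine ⟨inv_mem hun, fun d hd => ?_⟩
          have hid : ⁅u⁻¹, d⁆ = u⁻¹ * ⁅u,d⁆⁻¹ * (u⁻¹)⁻¹ := by group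
          rw [hid]
          have hud : ⁅u,d⁆ ∈ relLCS D (n+1) := Subgroup.commutator_mem_commutator hun hd
          exact (hconj _ (inv_mem (hu d hd)) (inv_mem hud) u⁻¹
            (inv_mem (relLCS_le_self D n hun))).1 }
    have hPle : relLCS D n ≤ P := by
      refine le_trans ih (sup_le ?_ ?_)
      · rw [Subgroup.closure_le]
        intro g hg
        exact ⟨commSet_subset_relLCS X n hg, fun d hd =>
          hbase g hg (commSet_subset_relLCS X n hg) d hd⟩
      · intro z hz
        refine ⟨relLCS_succ_le D n hz, fun d hd => ?_⟩
        have : ⁅z, d⁆ ∈ relLCS D (n+2) := Subgroup.commutator_mem_commutator hz hd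
        exact le_sup_right (a := Subgroup.closure (commSet X (n+1))) this
    rw [Subgroup.commutator_le]
    exact fun u hu d hd => (hPle hu).2 d hd


/-- Left-normed iterated commutator. -/
def leftcomm (y : H) : List H → H
  | [] => y
  | x :: xs => leftcomm ⁅y, x⁆ xs

@[simp] lemma leftcomm_nil (y : H) : leftcomm y [] = y := rfl
@[simp] lemma leftcomm_cons (y x : H) (xs : List H) :
    leftcomm y (x :: xs) = leftcomm ⁅y, x⁆ xs := rfl

lemma leftcomm_one (xs : List H) : leftcomm (1 : H) xs = 1 := by
  induction xs with
  | nil => rfl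
  | cons x xs ih => rw [leftcomm_cons]; rw [show ⁅(1:H), x⁆ = 1 by group]; exact ih

lemma leftcomm_append (y : H) (xs : List H) (x : H) :
    leftcomm y (xs ++ [x]) = ⁅leftcomm y xs, x⁆ := by
  induction xs generalizing y with
  | nil => rfl
  | cons a as ih => simp only [List.cons_append, leftcomm_cons]; exact ih _

lemma leftcomm_mem_gam {k : ℕ} {y : H} (hy : y ∈ gam H k) (xs : List H) :
    leftcomm y xs ∈ gam H (k + xs.length) := by
  induction xs generalizing y k with
  | nil => simpa only [leftcomm_nil, List.length_nil, Nat.add_zero] using hy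
  | cons x xs ih =>
    have h := ih (comm_mem_gam hy x)
    have he : k + 1 + xs.length = k + (x :: xs).length := by
      simp only [List.length_cons]; ring
    exact he ▸ h

lemma commSet_eq_leftcomm (X : Set H) (n : ℕ) {g : H} (hg : g ∈ commSet X n) :
    ∃ x ∈ X, ∃ xs : List H, (∀ z ∈ xs, z ∈ X) ∧ xs.length = n ∧ g = leftcomm x xs := by
  induction n generalizing g with
  | zero => exact ⟨g, hg, [], by simp, rfl, rfl⟩
  | succ n ih =>
    obtain ⟨a, ha, x, hx, rfl⟩ := hg
    obtain ⟨x₀, hx₀, xs, hxs, hlen, rfl⟩ := ih ha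
    exact ⟨x₀, hx₀, xs ++ [x], by
      intro z hz; rcases List.mem_append.mp hz with h | h
      · exact hxs z h
      · simp at h; subst h; exact hx, by simp [hlen], (leftcomm_append _ _ _).symm⟩

/-- Multiplicativity of left-normed commutators modulo deeper terms. -/
lemma leftcomm_mul (xs : List H) : ∀ (k : ℕ) (y z : H), y ∈ gam H k → z ∈ gam H k →
    ∃ e ∈ gam H (k + xs.length + 1), leftcomm (y * z) xs = leftcomm y xs * leftcomm z xs * e := by
  induction xs with
  | nil =>
    intro k y z _ _
    exact ⟨1, Subgroup.one_mem _, by simp⟩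
  | cons x xs ih =>
    intro k y z hy hz
    have hyx : ⁅y, x⁆ ∈ gam H (k+1) := comm_mem_gam hy x
    have hzx : ⁅z, x⁆ ∈ gam H (k+1) := comm_mem_gam hz x
    -- ⁅y*z, x⁆ = ⁅y,x⁆ * (⁅z,x⁆ * e₀) with e₀ ∈ gam (k+2)
    have key : ∃ e₀ ∈ gam H (k+2), ⁅y*z, x⁆ = ⁅y,x⁆ * (⁅z,x⁆ * e₀) := by
      have c1 : ⁅y*z, x⁆ = ⁅z,x⁆ * ⁅⁅z,x⁆⁻¹, y⁆ * ⁅y,x⁆ := by group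
      have hc : ⁅⁅z,x⁆⁻¹, y⁆ ∈ gam H (k+2) := comm_mem_gam (inv_mem hzx) y
      -- swap: w * ⁅y,x⁆ = ⁅y,x⁆ * (w * ⁅w⁻¹? ...⁆)
      set w : H := ⁅z,x⁆ * ⁅⁅z,x⁆⁻¹, y⁆ with hw
      have hwmem : w ∈ gam H (k+1) := mul_mem hzx (gam_succ_le (k+1) hc)
      have c2 : w * ⁅y,x⁆ = ⁅y,x⁆ * (w * ⁅w⁻¹, ⁅y,x⁆⁻¹⁆) := by group
      have hc2 : ⁅w⁻¹, ⁅y,x⁆⁻¹⁆ ∈ gam H (k+2) := comm_mem_gam (inv_mem hwmem) _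
      refine ⟨⁅⁅z,x⁆⁻¹, y⁆ * ⁅w⁻¹, ⁅y,x⁆⁻¹⁆, mul_mem hc hc2, ?_⟩
      rw [c1, ← mul_assoc]
      rw [c2]
      simp [hw, mul_assoc]
    obtain ⟨e₀, he₀, hkey⟩ := key
    have hze₀ : ⁅z,x⁆ * e₀ ∈ gam H (k+1) := mul_mem hzx (gam_succ_le (k+1) he₀)
    obtain ⟨e₁, he₁, h1⟩ := ih (k+1) _ _ hyx hze₀
    obtain ⟨e₂, he₂, h2⟩ := ih (k+1) _ _ hzx (gam_succ_le (k+1) he₀)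
    have hE : leftcomm e₀ xs ∈ gam H (k + 2 + xs.length) := leftcomm_mem_gam he₀ xs
    refine ⟨leftcomm e₀ xs * e₂ * e₁, ?_, ?_⟩
    · have h3 : k + 2 + xs.length = k + (x :: xs).length + 1 := by simp [List.length_cons]; ring
      have h4 : k + 1 + xs.length + 1 = k + (x :: xs).length + 1 := by
        simp [List.length_cons]; ring
      refine mul_mem (mul_mem ?_ ?_) ?_
      · exact h3 ▸ hE
      · exact h4 ▸ he₂
      · exact h4 ▸ he₁
    · rw [leftcomm_cons, hkey, h1, h2]
      simp [mul_assoc]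

lemma leftcomm_inv (xs : List H) : ∀ (k : ℕ) (y : H), y ∈ gam H k →
    ∃ e ∈ gam H (k + xs.length + 1), leftcomm y⁻¹ xs = (leftcomm y xs)⁻¹ * e := by
  induction xs with
  | nil => intro k y _; exact ⟨1, Subgroup.one_mem _, by simp⟩
  | cons x xs ih =>
    intro k y hy
    have hyx : ⁅y, x⁆ ∈ gam H (k+1) := comm_mem_gam hy x
    have c1 : ⁅y⁻¹, x⁆ = ⁅y,x⁆⁻¹ * ⁅⁅y,x⁆, y⁻¹⁆ := by group
    have he₀ : ⁅⁅y,x⁆, y⁻¹⁆ ∈ gam H (k+2) := comm_mem_gam hyx _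
    obtain ⟨e₁, he₁, h1⟩ := leftcomm_mul xs (k+1) ⁅y,x⁆⁻¹ ⁅⁅y,x⁆, y⁻¹⁆
      (inv_mem hyx) (gam_succ_le (k+1) he₀)
    obtain ⟨e₂, he₂, h2⟩ := ih (k+1) _ hyx
    have hE : leftcomm ⁅⁅y,x⁆, y⁻¹⁆ xs ∈ gam H (k + 2 + xs.length) := leftcomm_mem_gam he₀ xs
    refine ⟨e₂ * leftcomm ⁅⁅y,x⁆, y⁻¹⁆ xs * e₁, ?_, ?_⟩
    · have h3 : k + 2 + xs.length = k + (x :: xs).length + 1 := by simp [List.length_cons]; ring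
      have h4 : k + 1 + xs.length + 1 = k + (x :: xs).length + 1 := by
        simp [List.length_cons]; ring
      exact mul_mem (mul_mem (h4 ▸ he₂) (h3 ▸ hE)) (h4 ▸ he₁)
    · rw [leftcomm_cons, c1, h1, h2]
      simp [mul_assoc]

/-- Every element of the subgroup generated by `{leftcomm y xs : y ∈ L}` is
`leftcomm y xs * e` with `y ∈ L` and `e` deeper. -/
lemma mem_closure_leftcomm (L : Subgroup H) (xs : List H) {g : H}
    (hg : g ∈ Subgroup.closure ((fun y => leftcomm y xs) '' (L : Set H))) :
    ∃ y ∈ L, ∃ e ∈ gam H (xs.length + 1), g = leftcomm y xs * e := by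
  have top_mem : ∀ y : H, y ∈ gam H 0 := fun y => Subgroup.mem_top y
  induction hg using Subgroup.closure_induction with
  | mem w hw =>
    obtain ⟨y, hy, rfl⟩ := hw
    exact ⟨y, hy, 1, Subgroup.one_mem _, by simp⟩
  | one => exact ⟨1, Subgroup.one_mem _, 1, Subgroup.one_mem _, by simp [leftcomm_one]⟩
  | mul g₁ g₂ hg₁ hg₂ ih₁ ih₂ =>
    obtain ⟨y₁, hy₁, e₁, he₁, rfl⟩ := ih₁
    obtain ⟨y₂, hy₂, e₂, he₂, rfl⟩ := ih₂
    obtain ⟨e₃, he₃, h3⟩ := leftcomm_mul xs 0 y₁ y₂ (top_mem _) (top_mem _)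
    -- g₁ g₂ = f y₁ * e₁ * f y₂ * e₂ = f(y₁ y₂) * (e₃⁻¹ * (conj of e₁) * e₂)
    have hswap : e₁ * leftcomm y₂ xs = leftcomm y₂ xs * (e₁ * ⁅e₁⁻¹, (leftcomm y₂ xs)⁻¹⁆) := by
      group
    have hc : ⁅e₁⁻¹, (leftcomm y₂ xs)⁻¹⁆ ∈ gam H (xs.length + 1) :=
      gam_succ_le _ (comm_mem_gam (inv_mem he₁) _)
    have h0 : (0 : ℕ) + xs.length + 1 = xs.length + 1 := by ring
    rw [h0] at he₃
    refine ⟨y₁ * y₂, mul_mem hy₁ hy₂, e₃⁻¹ * (e₁ * ⁅e₁⁻¹, (leftcomm y₂ xs)⁻¹⁆) * e₂,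
      mul_mem (mul_mem (inv_mem he₃) (mul_mem he₁ hc)) he₂, ?_⟩
    calc leftcomm y₁ xs * e₁ * (leftcomm y₂ xs * e₂)
        = leftcomm y₁ xs * (e₁ * leftcomm y₂ xs) * e₂ := by simp [mul_assoc]
      _ = leftcomm y₁ xs * (leftcomm y₂ xs * (e₁ * ⁅e₁⁻¹, (leftcomm y₂ xs)⁻¹⁆)) * e₂ := by
          rw [hswap]
      _ = (leftcomm y₁ xs * leftcomm y₂ xs * e₃) *
            (e₃⁻¹ * (e₁ * ⁅e₁⁻¹, (leftcomm y₂ xs)⁻¹⁆) * e₂) := by simp [mul_assoc]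
      _ = leftcomm (y₁ * y₂) xs * (e₃⁻¹ * (e₁ * ⁅e₁⁻¹, (leftcomm y₂ xs)⁻¹⁆) * e₂) := by rw [h3]
  | inv g hg ih =>
    obtain ⟨y, hy, e, he, rfl⟩ := ih
    obtain ⟨e₅, he₅, h5⟩ := leftcomm_inv xs 0 y (top_mem _)
    have h0 : (0 : ℕ) + xs.length + 1 = xs.length + 1 := by ring
    rw [h0] at he₅
    -- (f y * e)⁻¹ = e⁻¹ * (f y)⁻¹ = (f y)⁻¹ * (conj of e⁻¹) ; (f y)⁻¹ = f (y⁻¹) * e₅⁻¹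
    have hswap : e⁻¹ * (leftcomm y xs)⁻¹ =
        (leftcomm y xs)⁻¹ * (e⁻¹ * ⁅e, leftcomm y xs⁆) := by group
    have hc : ⁅e, leftcomm y xs⁆ ∈ gam H (xs.length + 1) :=
      gam_succ_le _ (comm_mem_gam he _)
    refine ⟨y⁻¹, inv_mem hy, e₅⁻¹ * (e⁻¹ * ⁅e, leftcomm y xs⁆),
      mul_mem (inv_mem he₅) (mul_mem (inv_mem he) hc), ?_⟩
    have hfy : (leftcomm y xs)⁻¹ = leftcomm y⁻¹ xs * e₅⁻¹ := by
      rw [h5]; simp [mul_assoc]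
    calc (leftcomm y xs * e)⁻¹ = e⁻¹ * (leftcomm y xs)⁻¹ := by simp
      _ = (leftcomm y xs)⁻¹ * (e⁻¹ * ⁅e, leftcomm y xs⁆) := hswap
      _ = leftcomm y⁻¹ xs * e₅⁻¹ * (e⁻¹ * ⁅e, leftcomm y xs⁆) := by rw [hfy]
      _ = leftcomm y⁻¹ xs * (e₅⁻¹ * (e⁻¹ * ⁅e, leftcomm y xs⁆)) := by simp [mul_assoc]

end Algebra


section SetProd

variable {H : Type*} [Group H]

/-- Product of a list of subgroups, as a set. -/
def prodS (ms : List (Subgroup H)) : Set H := (ms.map (fun M : Subgroup H => (M : Set H))).prod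

@[simp] lemma prodS_nil : prodS ([] : List (Subgroup H)) = 1 := rfl
@[simp] lemma prodS_cons (M : Subgroup H) (ms : List (Subgroup H)) :
    prodS (M :: ms) = (M : Set H) * prodS ms := by simp [prodS]
lemma prodS_append (l₁ l₂ : List (Subgroup H)) : prodS (l₁ ++ l₂) = prodS l₁ * prodS l₂ := by
  simp [prodS]

lemma one_mem_prodS (ms : List (Subgroup H)) : (1 : H) ∈ prodS ms := by
  induction ms with
  | nil => exact Set.mem_one.mpr rfl
  | cons M r ih =>
    rw [prodS_cons, show (1:H) = 1 * 1 by simp]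
    exact Set.mul_mem_mul (Subgroup.one_mem M) ih

lemma prodS_subset {G : Subgroup H} {ms : List (Subgroup H)} (h : ∀ M ∈ ms, M ≤ G) :
    prodS ms ⊆ (G : Set H) := by
  induction ms with
  | nil => intro x hx; rw [Set.mem_one.mp hx]; exact Subgroup.one_mem G
  | cons M r ih =>
    rw [prodS_cons]
    rintro x ⟨a, ha, b, hb, rfl⟩
    exact mul_mem (h M (List.mem_cons_self (a := M) (l := r)) ha) (ih (fun M' hM' => h M' (List.mem_cons_of_mem _ hM')) hb)

lemma subgroup_coe_inv (G : Subgroup H) : (G : Set H)⁻¹ = (G : Set H) := by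
  ext x; simp [Set.mem_inv, Subgroup.inv_mem_iff]

lemma subgroup_coe_mul_self (G : Subgroup H) : (G : Set H) * G = (G : Set H) := by
  apply subset_antisymm
  · rintro x ⟨a, ha, b, hb, rfl⟩; exact mul_mem ha hb
  · intro x hx; rw [show x = x * 1 by simp]; exact Set.mul_mem_mul hx (Subgroup.one_mem G)

lemma prodS_inv (ms : List (Subgroup H)) : (prodS ms)⁻¹ = prodS ms.reverse := by
  induction ms with
  | nil => simp [prodS]
  | cons M r ih =>
    rw [prodS_cons, mul_inv_rev, ih, List.reverse_cons, prodS_append]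
    simp [subgroup_coe_inv]

lemma normal_swap {N : Subgroup H} (hN : N.Normal) (X : Set H) :
    X * (N : Set H) = (N : Set H) * X := by
  ext z
  constructor
  · rintro ⟨x, hx, n, hn, rfl⟩
    exact ⟨x * n * x⁻¹, hN.conj_mem n hn x, x, hx, by group⟩
  · rintro ⟨n, hn, x, hx, rfl⟩
    exact ⟨x, hx, x⁻¹ * n * x, by simpa using hN.conj_mem n hn x⁻¹, by group⟩

lemma subset_mul_one_right {A B : Set H} (hB : (1:H) ∈ B) : A ⊆ A * B := fun x hx => by
  rw [show x = x * 1 by simp]; exact Set.mul_mem_mul hx hB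

lemma subset_one_mul_left {A B : Set H} (hA : (1:H) ∈ A) : B ⊆ A * B := fun x hx => by
  rw [show x = 1 * x by simp]; exact Set.mul_mem_mul hA hx

end SetProd

section Engine

variable {H : Type*} [Group H] [TopologicalSpace H] [IsTopologicalGroup H]

/-- Elements of the subgroup generated by a symmetric set `V` containing `1`
lie in some power `V ^ k`. -/
lemma mem_closure_subset_iUnion_pow {V : Set H} (hV1 : (1:H) ∈ V) (hVs : V⁻¹ = V) :
    ((Subgroup.closure V : Subgroup H) : Set H) ⊆ ⋃ k : ℕ, V ^ k := by
  have hpowinv : ∀ k : ℕ, (V ^ k)⁻¹ = V ^ k := by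
    intro k
    induction k with
    | zero => simp
    | succ k ih => rw [pow_succ, mul_inv_rev, ih, hVs, ← pow_succ', pow_succ]
  let U : Subgroup H :=
    { carrier := ⋃ k : ℕ, V ^ k
      one_mem' := Set.mem_iUnion.mpr ⟨0, by simp⟩
      mul_mem' := by
        rintro a b ha hb
        obtain ⟨i, hi⟩ := Set.mem_iUnion.mp ha
        obtain ⟨j, hj⟩ := Set.mem_iUnion.mp hb
        exact Set.mem_iUnion.mpr ⟨i + j, by rw [pow_add]; exact Set.mul_mem_mul hi hj⟩
      inv_mem' := by
        rintro a ha
        obtain ⟨i, hi⟩ := Set.mem_iUnion.mp ha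
        exact Set.mem_iUnion.mpr ⟨i, by rw [← hpowinv i]; exact Set.inv_mem_inv.mpr hi⟩ }
  have : Subgroup.closure V ≤ U := Subgroup.closure_le U |>.mpr
    (fun x hx => Set.mem_iUnion.mpr ⟨1, by simpa [pow_one] using hx⟩)
  exact fun x hx => this hx

/-- Members of the subgroup generated by a union of subgroups lie in a finite product. -/
lemma mem_closure_iUnion_subgroups {𝓜 : Set (Subgroup H)} {p : H}
    (hp : p ∈ Subgroup.closure (⋃ M ∈ 𝓜, (M : Set H))) :
    ∃ ms : List (Subgroup H), (∀ M ∈ ms, M ∈ 𝓜) ∧ p ∈ prodS ms := by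
  induction hp using Subgroup.closure_induction with
  | mem x hx =>
    obtain ⟨M, hM, hxM⟩ := Set.mem_iUnion₂.mp hx
    exact ⟨[M], by intro M' hM'; rw [List.mem_singleton.mp hM']; exact hM,
      by simpa [prodS] using subset_mul_one_right (Set.mem_one.mpr rfl) hxM⟩
  | one => exact ⟨[], by simp, by simp [prodS]⟩
  | mul a b _ _ iha ihb =>
    obtain ⟨m₁, h₁, hp₁⟩ := iha
    obtain ⟨m₂, h₂, hp₂⟩ := ihb
    refine ⟨m₁ ++ m₂, ?_, ?_⟩
    · intro M hM; rcases List.mem_append.mp hM with h | h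
      · exact h₁ M h
      · exact h₂ M h
    · rw [prodS_append]; exact Set.mul_mem_mul hp₁ hp₂
  | inv a _ iha =>
    obtain ⟨m₁, h₁, hp₁⟩ := iha
    exact ⟨m₁.reverse, fun M hM => h₁ M (List.mem_reverse.mp hM),
      by rw [← prodS_inv]; exact Set.inv_mem_inv.mpr hp₁⟩

/-- The main "abelian relative to N" engine. -/
lemma engine [LocallyCompactSpace H]
    (G N : Subgroup H) (hN : N.Normal)
    (hGN : ∀ x ∈ G, ∀ y ∈ G, ⁅x, y⁆ ∈ N)
    (hGclosed : IsClosed (G : Set H))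
    (R : Set H) (hR : IsCompact R) (hRG : R ⊆ (G : Set H))
    (hgen : (G : Set H) ⊆ closure ((Subgroup.closure R : Subgroup H) : Set H))
    (𝓜 : Set (Subgroup H)) (h𝓜G : ∀ M ∈ 𝓜, M ≤ G)
    (hdense : (G : Set H) ⊆
      closure ((Subgroup.closure (⋃ M ∈ 𝓜, (M : Set H)) : Subgroup H) : Set H)) :
    ∃ (V' : Set H) (ms : List (Subgroup H)), IsCompact V' ∧ V' ⊆ (G : Set H) ∧
      (∀ M ∈ ms, M ∈ 𝓜) ∧ (G : Set H) ⊆ V' * prodS ms * (N : Set H) := by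
  classical
  obtain ⟨K, hKc, hK1⟩ := exists_compact_mem_nhds (1 : H)
  -- symmetric compact relative neighborhood of 1 in G
  set W₀ : Set H := (G : Set H) ∩ (K ∪ K⁻¹) with hW₀
  have hW₀c : IsCompact W₀ := (hKc.union hKc.inv).inter_left hGclosed
  have hW₀G : W₀ ⊆ (G : Set H) := Set.inter_subset_left
  have hW₀s : W₀⁻¹ = W₀ := by
    rw [hW₀, Set.inter_inv, Set.union_inv, subgroup_coe_inv, inv_inv, Set.union_comm]
  have h1W₀ : (1:H) ∈ W₀ := ⟨Subgroup.one_mem G, Or.inl (mem_of_mem_nhds hK1)⟩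
  have hGK : (G : Set H) ∩ K ⊆ W₀ := fun x hx => ⟨hx.1, Or.inl hx.2⟩
  set V' : Set H := W₀ * W₀ with hV'
  have hV'c : IsCompact V' := hW₀c.mul hW₀c
  have hV'G : V' ⊆ (G : Set H) := by
    rw [hV']; rintro x ⟨a, ha, b, hb, rfl⟩; exact mul_mem (hW₀G ha) (hW₀G hb)
  have h1V' : (1:H) ∈ V' := by rw [hV', show (1:H) = 1*1 by simp]; exact Set.mul_mem_mul h1W₀ h1W₀
  -- generating compact symmetric set V
  set V : Set H := R ∪ R⁻¹ ∪ W₀ with hVdef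
  have hVc : IsCompact V := (hR.union hR.inv).union hW₀c
  have hVG : V ⊆ (G : Set H) := by
    rintro x ((h | h) | h)
    · exact hRG h
    · exact (Subgroup.inv_mem_iff G).mp (hRG (Set.mem_inv.mp h))
    · exact hW₀G h
  have hVs : V⁻¹ = V := by
    rw [hVdef, Set.union_inv, Set.union_inv, inv_inv, hW₀s, Set.union_comm R⁻¹ R]
  have h1V : (1:H) ∈ V := Or.inr h1W₀
  -- G is the union of powers of V
  have hGpow : (G : Set H) ⊆ ⋃ k : ℕ, V ^ k := by
    have hP : (G : Set H) ⊆ ((Subgroup.closure V : Subgroup H) : Set H) := by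
      intro g hg
      have hg' : g ∈ closure ((Subgroup.closure V : Subgroup H) : Set H) := by
        refine closure_mono ?_ (hgen hg)
        exact SetLike.coe_subset_coe.mpr (Subgroup.closure_mono (by
          intro x hx; exact Or.inl (Or.inl hx)))
      -- relative openness argument
      have hopen : ((fun y => g * y) '' interior K) ∈ nhds g := by
        refine IsOpen.mem_nhds ((isOpen_interior).smul g) ?_
        exact ⟨1, mem_interior_iff_mem_nhds.mpr hK1, by simp⟩
      obtain ⟨p, hpN, hpP⟩ := mem_closure_iff_nhds.mp hg' _ hopen
      obtain ⟨u, hu, hpu⟩ := hpN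
      -- p = g * u with u ∈ interior K ; u = g⁻¹ p ∈ G
      have hpG : p ∈ G := Subgroup.closure_le G |>.mpr hVG hpP
      have huG : u ∈ (G : Set H) := by
        have : u = g⁻¹ * p := by rw [← hpu]; group
        rw [this]; exact mul_mem (inv_mem hg) hpG
      have huW : u ∈ W₀ := hGK ⟨huG, interior_subset hu⟩
      have : g = p * u⁻¹ := by rw [← hpu]; group
      rw [this]
      exact mul_mem hpP (Subgroup.inv_mem _ (Subgroup.subset_closure (Or.inr huW)))
    intro g hg
    exact mem_closure_subset_iUnion_pow h1V hVs (hP hg)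
  -- covering lemma
  set S𝓜 : Subgroup H := Subgroup.closure (⋃ M ∈ 𝓜, (M : Set H)) with hS𝓜
  have hS𝓜G : S𝓜 ≤ G := Subgroup.closure_le G |>.mpr (by
    intro x hx
    obtain ⟨M, hM, hxM⟩ := Set.mem_iUnion₂.mp hx
    exact h𝓜G M hM hxM)
  have covers : ∀ T : Set H, IsCompact T → T ⊆ (G : Set H) →
      ∃ ms : List (Subgroup H), (∀ M ∈ ms, M ∈ 𝓜) ∧ T ⊆ prodS ms * V' := by
    intro T hTc hTG
    obtain ⟨t, htT, hcov⟩ := hTc.elim_nhds_subcover (fun x => (fun y => x * y) '' interior K)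
      (fun x _ => by
        refine IsOpen.mem_nhds ((isOpen_interior).smul x) ?_
        exact ⟨1, mem_interior_iff_mem_nhds.mpr hK1, by simp⟩)
    -- for each x in t, find p_x ∈ S𝓜 with x ∈ p_x • W₀
    have hpick : ∀ x ∈ t, ∃ p : H, p ∈ S𝓜 ∧ x ∈ (fun y => p * y) '' W₀ := by
      intro x hxt
      have hxG : x ∈ (G : Set H) := hTG (htT x hxt)
      have hx' : x ∈ closure (S𝓜 : Set H) := hdense hxG
      have hopen : ((fun y => x * y) '' interior K) ∈ nhds x := by
        refine IsOpen.mem_nhds ((isOpen_interior).smul x) ?_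
        exact ⟨1, mem_interior_iff_mem_nhds.mpr hK1, by simp⟩
      obtain ⟨p, hpN, hpP⟩ := mem_closure_iff_nhds.mp hx' _ hopen
      obtain ⟨u, hu, hpu⟩ := hpN
      have hpG : p ∈ G := hS𝓜G hpP
      have huG : u ∈ (G : Set H) := by
        have : u = x⁻¹ * p := by rw [← hpu]; group
        rw [this]; exact mul_mem (inv_mem hxG) hpG
      have huW : u ∈ W₀ := hGK ⟨huG, interior_subset hu⟩
      exact ⟨p, hpP, ⟨u⁻¹, (by rw [← hW₀s]; exact Set.inv_mem_inv.mpr huW), by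
        rw [← hpu]; group⟩⟩
    -- combine the finitely many p_x into one product
    have hlist : ∀ x ∈ t, ∃ ms : List (Subgroup H), (∀ M ∈ ms, M ∈ 𝓜) ∧ x ∈ prodS ms * W₀ := by
      intro x hxt
      obtain ⟨p, hpS, u, hu, hpu⟩ := hpick x hxt
      obtain ⟨ms, hms, hpms⟩ := mem_closure_iUnion_subgroups hpS
      exact ⟨ms, hms, ⟨p, hpms, u, hu, hpu⟩⟩
    -- concat over the finset
    have hconcatgen : ∀ s : Finset H,
        (∀ x ∈ s, ∃ ms : List (Subgroup H), (∀ M ∈ ms, M ∈ 𝓜) ∧ x ∈ prodS ms * W₀) →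
        ∃ MS : List (Subgroup H), (∀ M ∈ MS, M ∈ 𝓜) ∧ ∀ x ∈ s, x ∈ prodS MS * W₀ := by
      intro s
      induction s using Finset.induction with
      | empty => exact fun _ => ⟨[], by simp, by simp⟩
      | @insert y s hys ih =>
        intro h
        obtain ⟨MS, hMS, hmem⟩ := ih (fun x hx => h x (Finset.mem_insert_of_mem hx))
        obtain ⟨ms, hms, hyms⟩ := h y (Finset.mem_insert_self y s)
        refine ⟨ms ++ MS, ?_, ?_⟩
        · intro M hM; rcases List.mem_append.mp hM with h' | h'
          · exact hms M h'
          · exact hMS M h'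
        · intro x hx
          rcases Finset.mem_insert.mp hx with rfl | hx'
          · obtain ⟨p, hp, u, hu, hpu⟩ := hyms
            refine ⟨p, ?_, u, hu, hpu⟩
            rw [prodS_append]
            exact subset_mul_one_right (one_mem_prodS MS) hp
          · obtain ⟨p, hp, u, hu, hpu⟩ := hmem x hx'
            refine ⟨p, ?_, u, hu, hpu⟩
            rw [prodS_append]
            exact subset_one_mul_left (one_mem_prodS ms) hp
    have hconcat := hconcatgen t hlist
    obtain ⟨MS, hMS, hmem⟩ := hconcat
    refine ⟨MS, hMS, ?_⟩
    intro z hzT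
    obtain ⟨x, hxt, hz⟩ := Set.mem_iUnion₂.mp (hcov hzT)
    obtain ⟨u, hu, hxu⟩ := hz
    -- z = x * u, u ∈ interior K, u ∈ G so u ∈ W₀, and x ∈ prodS MS * W₀
    have hzG : z ∈ (G : Set H) := hTG hzT
    have hxG : x ∈ (G : Set H) := hTG (htT x hxt)
    have huG : u ∈ (G : Set H) := by
      have : u = x⁻¹ * z := by rw [← hxu]; group
      rw [this]; exact mul_mem (inv_mem hxG) hzG
    have huW : u ∈ W₀ := hGK ⟨huG, interior_subset hu⟩
    obtain ⟨p, hp, w, hw, hxw⟩ := hmem x hxt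
    refine ⟨p, hp, w * u, Set.mul_mem_mul hw huW, by rw [← hxu, ← hxw]; group⟩
  -- sorting lemmas: products of the subgroups in `ms` can be sorted modulo N
  have swap_sets : ∀ (A B : Set H), A ⊆ (G:Set H) → B ⊆ (G:Set H) →
      A * B ⊆ B * A * (N : Set H) := by
    rintro A B hA hB z ⟨x, hx, y, hy, rfl⟩
    exact ⟨y * x, Set.mul_mem_mul hy hx, ⁅x⁻¹, y⁻¹⁆,
      hGN _ (inv_mem (hA hx)) _ (inv_mem (hB hy)), by show y*x*⁅x⁻¹,y⁻¹⁆ = x*y; group⟩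
  have NN : (N : Set H) * (N : Set H) = (N : Set H) := subgroup_coe_mul_self N
  have pull_through : ∀ (ms : List (Subgroup H)), (∀ M ∈ ms, M ≤ G) →
      ∀ M₀ ∈ ms, (M₀ : Set H) * prodS ms ⊆ prodS ms * (N : Set H) := by
    intro ms hmsG
    induction ms with
    | nil => intro M₀ h; exact absurd h (List.not_mem_nil (a := M₀))
    | cons M' r ih =>
      intro M₀ hM₀
      have hM'G : M' ≤ G := hmsG M' (List.mem_cons_self (a := M') (l := r))
      have hrG : ∀ M ∈ r, M ≤ G := fun M hM => hmsG M (List.mem_cons_of_mem _ hM)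
      rcases List.mem_cons.mp hM₀ with rfl | hM₀r
      · rw [prodS_cons, ← mul_assoc, subgroup_coe_mul_self]
        exact subset_mul_one_right (Subgroup.one_mem N)
      · have hM₀G : M₀ ≤ G := hrG M₀ hM₀r
        have e1 : (N:Set H) * prodS r = prodS r * (N:Set H) := (normal_swap hN _).symm
        rw [prodS_cons, ← mul_assoc]
        calc (M₀ : Set H) * M' * prodS r
            ⊆ ((M' : Set H) * M₀ * (N:Set H)) * prodS r :=
              Set.mul_subset_mul_right (swap_sets _ _ hM₀G hM'G)
          _ = (M':Set H) * ((M₀:Set H) * ((N:Set H) * prodS r)) := by simp only [mul_assoc]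
          _ = (M':Set H) * ((M₀:Set H) * (prodS r * (N:Set H))) := by rw [e1]
          _ = (M':Set H) * ((M₀:Set H) * prodS r * (N:Set H)) := by simp only [mul_assoc]
          _ ⊆ (M':Set H) * (prodS r * (N:Set H) * (N:Set H)) :=
              Set.mul_subset_mul_left (Set.mul_subset_mul_right (ih hrG M₀ hM₀r))
          _ = (M':Set H) * (prodS r * ((N:Set H) * (N:Set H))) := by simp only [mul_assoc]
          _ = (M':Set H) * prodS r * (N:Set H) := by rw [NN]; simp only [mul_assoc]
  have sort : ∀ (ms l₂ : List (Subgroup H)), (∀ M ∈ ms, M ≤ G) → (∀ M ∈ l₂, M ∈ ms) →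
      prodS l₂ * prodS ms ⊆ prodS ms * (N : Set H) := by
    intro ms l₂ hmsG
    induction l₂ with
    | nil =>
      intro _
      rw [prodS_nil, one_mul]
      exact subset_mul_one_right (Subgroup.one_mem N)
    | cons M r ih =>
      intro h₂
      have hMms : M ∈ ms := h₂ M (List.mem_cons_self (a := M) (l := r))
      have hr : ∀ M' ∈ r, M' ∈ ms := fun M' hM' => h₂ M' (List.mem_cons_of_mem _ hM')
      calc prodS (M :: r) * prodS ms
          = (M : Set H) * (prodS r * prodS ms) := by rw [prodS_cons]; simp only [mul_assoc]
        _ ⊆ (M : Set H) * (prodS ms * (N:Set H)) := Set.mul_subset_mul_left (ih hr)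
        _ = ((M : Set H) * prodS ms) * (N:Set H) := by simp only [mul_assoc]
        _ ⊆ (prodS ms * (N:Set H)) * (N:Set H) :=
            Set.mul_subset_mul_right (pull_through ms hmsG M hMms)
        _ = prodS ms * ((N:Set H) * (N:Set H)) := by simp only [mul_assoc]
        _ = prodS ms * (N:Set H) := by rw [NN]
  -- the covering product for V * V'
  have hT₁c : IsCompact (V * V') := hVc.mul hV'c
  have hT₁G : V * V' ⊆ (G : Set H) := by
    rintro x ⟨a, ha, b, hb, rfl⟩; exact mul_mem (hVG ha) (hV'G hb)
  obtain ⟨ps, hps𝓜, hT₁⟩ := covers (V * V') hT₁c hT₁G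
  have hpsG : ∀ M ∈ ps, M ≤ G := fun M hM => h𝓜G M (hps𝓜 M hM)
  have hPG : prodS ps ⊆ (G : Set H) := prodS_subset hpsG
  have e1 : (N:Set H) * V' = V' * (N:Set H) := (normal_swap hN _).symm
  -- main induction on powers of V
  have main : ∀ k : ℕ, V ^ k * V' ⊆ prodS ps * (N : Set H) * V' := by
    intro k
    induction k with
    | zero =>
      rw [pow_zero]
      rw [one_mul]
      intro x hx
      exact ⟨1 * 1, Set.mul_mem_mul (one_mem_prodS ps) (Subgroup.one_mem N), x, hx, by group⟩
    | succ k ih =>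
      have hVpow : ∀ j : ℕ, V ^ j ⊆ (G : Set H) := by
        intro j
        induction j with
        | zero =>
          rw [pow_zero]
          intro x hx
          rw [Set.mem_one.mp hx]; exact Subgroup.one_mem G
        | succ j ihj =>
          rw [pow_succ]
          rintro x ⟨a, ha, b, hb, rfl⟩
          exact mul_mem (ihj ha) (hVG hb)
      calc V ^ (k+1) * V'
          = V * (V ^ k * V') := by rw [pow_succ']; simp only [mul_assoc]
        _ ⊆ V * (prodS ps * (N:Set H) * V') := Set.mul_subset_mul_left ih
        _ = (V * prodS ps) * ((N:Set H) * V') := by simp only [mul_assoc]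
        _ ⊆ (prodS ps * V * (N:Set H)) * ((N:Set H) * V') :=
            Set.mul_subset_mul_right (swap_sets V (prodS ps) hVG hPG)
        _ = prodS ps * V * (((N:Set H) * (N:Set H)) * V') := by simp only [mul_assoc]
        _ = prodS ps * V * ((N:Set H) * V') := by rw [NN]
        _ = prodS ps * (V * V') * (N:Set H) := by rw [e1]; simp only [mul_assoc]
        _ ⊆ prodS ps * (prodS ps * V') * (N:Set H) :=
            Set.mul_subset_mul_right (Set.mul_subset_mul_left hT₁)
        _ = (prodS ps * prodS ps) * ((N:Set H) * V') := by rw [e1]; simp only [mul_assoc]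
        _ ⊆ (prodS ps * (N:Set H)) * ((N:Set H) * V') :=
            Set.mul_subset_mul_right (sort ps ps hpsG (fun M hM => hM))
        _ = prodS ps * (((N:Set H) * (N:Set H)) * V') := by simp only [mul_assoc]
        _ = prodS ps * (N:Set H) * V' := by rw [NN]; simp only [mul_assoc]
  -- conclude : G ⊆ prodS ps * N * V', then invert
  have hGsub : (G : Set H) ⊆ prodS ps * (N : Set H) * V' := by
    intro g hg
    obtain ⟨k, hk⟩ := Set.mem_iUnion.mp (hGpow hg)
    exact main k ⟨g, hk, 1, h1V', by group⟩
  refine ⟨V', ps.reverse, hV'c, hV'G, fun M hM => hps𝓜 M (List.mem_reverse.mp hM), ?_⟩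
  intro g hg
  have hginv : g⁻¹ ∈ prodS ps * (N : Set H) * V' := hGsub (inv_mem hg)
  obtain ⟨w, hw, v, hv, heq⟩ := hginv
  obtain ⟨p, hp, n₂, hn₂, rfl⟩ := hw
  have hgval : g = v⁻¹ * n₂⁻¹ * p⁻¹ := by
    rw [← inv_inv g, ← heq]; group
  have hV'inv : V'⁻¹ = V' := by rw [hV', mul_inv_rev, hW₀s]
  refine ⟨v⁻¹ * p⁻¹, ⟨v⁻¹, ?_, p⁻¹, ?_, rfl⟩, p * n₂⁻¹ * p⁻¹,
    hN.conj_mem _ (inv_mem hn₂) p, ?_⟩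
  · rw [← hV'inv]; exact Set.inv_mem_inv.mpr hv
  · rw [← prodS_inv]; exact Set.inv_mem_inv.mpr hp
  · show v⁻¹ * p⁻¹ * (p * n₂⁻¹ * p⁻¹) = g
    rw [hgval]; group

end Engine

section TopAux

variable {H : Type*} [Group H] [TopologicalSpace H] [IsTopologicalGroup H]

lemma mem_of_mem_closure_one {x : H} (hx : x ∈ closure ({1} : Set H)) {V : Set H}
    (hV : V ∈ nhds (1 : H)) : x ∈ V := by
  have hVi : V⁻¹ ∈ nhds (1 : H) := by simpa using inv_mem_nhds_one H hV
  have hcont : ContinuousAt (fun y : H => y * x⁻¹) x :=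
    (continuous_id.mul continuous_const).continuousAt
  have ht : ((fun y : H => y * x⁻¹) ⁻¹' V⁻¹) ∈ nhds x := by
    refine hcont.preimage_mem_nhds ?_
    simpa using hVi
  obtain ⟨z, hz1, hz2⟩ := mem_closure_iff_nhds.mp hx _ ht
  rw [Set.mem_singleton_iff.mp hz2] at hz1
  have : x⁻¹ ∈ V⁻¹ := by simpa using hz1
  simpa using this

lemma isCompact_closure_one [LocallyCompactSpace H] : IsCompact (closure ({1} : Set H)) := by
  obtain ⟨K, hKc, hK1⟩ := exists_compact_mem_nhds (1 : H)
  exact hKc.of_isClosed_subset isClosed_closure (fun x hx => mem_of_mem_closure_one hx hK1)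

lemma commutator_topClosure (A B : Subgroup H) :
    ⁅A.topologicalClosure, B.topologicalClosure⁆ ≤ ⁅A, B⁆.topologicalClosure := by
  rw [Subgroup.commutator_le]
  have hC : IsClosed ((⁅A, B⁆.topologicalClosure : Subgroup H) : Set H) :=
    Subgroup.isClosed_topologicalClosure _
  have s1 : ∀ a ∈ A, ∀ y ∈ closure (B : Set H),
      ⁅a, y⁆ ∈ ((⁅A, B⁆.topologicalClosure : Subgroup H) : Set H) := by
    intro a ha y hy
    have hcont : Continuous fun y : H => ⁅a, y⁆ := by
      show Continuous fun y : H => a * y * a⁻¹ * y⁻¹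
      exact ((continuous_const.mul continuous_id).mul continuous_const).mul continuous_inv
    refine closure_minimal ?_ (hC.preimage hcont) hy
    exact fun b hb => Subgroup.le_topologicalClosure _
      (Subgroup.commutator_mem_commutator ha hb)
  intro g₁ hg₁ g₂ hg₂
  have hg₂' : g₂ ∈ closure (B : Set H) := by
    rwa [← Subgroup.topologicalClosure_coe]
  have hg₁' : g₁ ∈ closure (A : Set H) := by
    rwa [← Subgroup.topologicalClosure_coe]
  have hcont : Continuous fun x : H => ⁅x, g₂⁆ := by
    show Continuous fun x : H => x * g₂ * x⁻¹ * g₂⁻¹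
    exact (((continuous_id.mul continuous_const).mul continuous_inv).mul continuous_const)
  have : ∀ a ∈ (A : Set H), ⁅a, g₂⁆ ∈ ((⁅A, B⁆.topologicalClosure : Subgroup H) : Set H) :=
    fun a ha => s1 a ha g₂ hg₂'
  exact closure_minimal this (hC.preimage hcont) hg₁'

lemma topClosure_top : ((⊤ : Subgroup H).topologicalClosure) = ⊤ :=
  le_antisymm le_top ((⊤ : Subgroup H).le_topologicalClosure)

end TopAux

section Gbar

variable (H : Type*) [Group H] [TopologicalSpace H] [IsTopologicalGroup H]

/-- Topological closure of the lower central series. -/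
def gbar (t : ℕ) : Subgroup H := (gam H t).topologicalClosure

variable {H}

instance gam_normal (t : ℕ) : (gam H t).Normal := by
  rw [show gam H t = lowerCentralSeries (⊤ : Subgroup H) t from relLCS_top_eq t]
  exact Subgroup.lowerCentralSeries_normal ⊤ t

instance gbar_normal (t : ℕ) : (gbar H t).Normal :=
  Subgroup.is_normal_topologicalClosure _

lemma gbar_closed (t : ℕ) : IsClosed ((gbar H t : Subgroup H) : Set H) :=
  Subgroup.isClosed_topologicalClosure _

lemma gam_le_gbar (t : ℕ) : gam H t ≤ gbar H t := Subgroup.le_topologicalClosure _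

lemma gbar_mono {s t : ℕ} (h : s ≤ t) : gbar H t ≤ gbar H s :=
  Subgroup.topologicalClosure_minimal _ ((relLCS_le_of_le ⊤ h).trans (gam_le_gbar s))
    (gbar_closed s)

lemma gbar_comm_le (t : ℕ) : ⁅gbar H t, (⊤ : Subgroup H)⁆ ≤ gbar H (t+1) := by
  have h1 : ⁅gbar H t, (⊤ : Subgroup H)⁆ =
      ⁅(gam H t).topologicalClosure, ((⊤ : Subgroup H)).topologicalClosure⁆ := by
    rw [topClosure_top]; rfl
  rw [h1]
  exact (commutator_topClosure (gam H t) ⊤)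

lemma comm_mem_gbar {t : ℕ} {g : H} (hg : g ∈ gbar H t) (b : H) : ⁅g, b⁆ ∈ gbar H (t+1) :=
  gbar_comm_le t (Subgroup.commutator_mem_commutator hg (Subgroup.mem_top b))

lemma comm_mem_gbar' {t : ℕ} {g : H} (hg : g ∈ gbar H t) (b : H) : ⁅b, g⁆ ∈ gbar H (t+1) := by
  have := comm_mem_gbar hg b
  rw [← commutatorElement_inv] at this
  exact (Subgroup.inv_mem_iff _).mp this

lemma gam_le_tc_relLCS {D : Subgroup H} (hD : D.topologicalClosure = ⊤) (t : ℕ) :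
    gam H t ≤ (relLCS D t).topologicalClosure := by
  induction t with
  | zero =>
    rw [show gam H 0 = ⊤ from rfl, ← hD]
    exact le_rfl
  | succ t ih =>
    have : gam H (t+1) = ⁅gam H t, ⊤⁆ := rfl
    rw [this]
    calc ⁅gam H t, (⊤ : Subgroup H)⁆
        ≤ ⁅(relLCS D t).topologicalClosure, D.topologicalClosure⁆ := by
          exact Subgroup.commutator_mono ih hD.ge
      _ ≤ ⁅relLCS D t, D⁆.topologicalClosure := commutator_topClosure _ _
      _ = (relLCS D (t+1)).topologicalClosure := rfl

lemma commSet_isCompact {Q : Set H} (hQ : IsCompact Q) (t : ℕ) : IsCompact (commSet Q t) := by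
  induction t with
  | zero => exact hQ
  | succ t ih =>
    have : commSet Q (t+1) = (fun p : H × H => ⁅p.1, p.2⁆) '' ((commSet Q t) ×ˢ Q) := by
      rw [Set.image_prod]
      rfl
    rw [this]
    refine (ih.prod hQ).image ?_
    show Continuous fun p : H × H => p.1 * p.2 * p.1⁻¹ * p.2⁻¹
    fun_prop

end Gbar

section Expand

variable {H : Type*} [Group H]

lemma prodS_singleton (L : Subgroup H) : prodS [L] = (L : Set H) := by simp [prodS]

/-- Expansion of iterated commutator images into pure 𝓛-products. -/
lemma Aexpand (𝓛 : Set (Subgroup H)) :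
    ∀ (xs : List H), (∀ z ∈ xs, z ∈ ⋃ L ∈ 𝓛, (L : Set H)) →
    ∀ (A : Set H) (E₀ : List (Subgroup H)), (∀ B ∈ E₀, B ∈ 𝓛) →
      A ⊆ prodS E₀ → A⁻¹ ⊆ prodS E₀ →
      ∃ E : List (Subgroup H), (∀ B ∈ E, B ∈ 𝓛) ∧
        (fun y => leftcomm y xs) '' A ⊆ prodS E ∧
        ((fun y => leftcomm y xs) '' A)⁻¹ ⊆ prodS E := by
  intro xs
  induction xs with
  | nil =>
    intro _ A E₀ hE₀ hA hA'
    refine ⟨E₀, hE₀, ?_, ?_⟩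
    · rintro z ⟨y, hy, rfl⟩; exact hA hy
    · rintro z hz
      rw [Set.mem_inv] at hz
      obtain ⟨y, hy, hyz⟩ := hz
      simp only [leftcomm_nil] at hyz
      have : z = y⁻¹ := by rw [hyz, inv_inv]
      rw [this]
      exact hA' (Set.inv_mem_inv.mpr hy)
  | cons x xs ih =>
    intro hxsX A E₀ hE₀ hA hA'
    have hxX : x ∈ ⋃ L ∈ 𝓛, (L : Set H) := hxsX x (List.mem_cons_self (a := x) (l := xs))
    obtain ⟨Lx, hLx, hxLx⟩ := Set.mem_iUnion₂.mp hxX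
    set A' : Set H := (fun y => ⁅y, x⁆) '' A with hA'def
    have hcomp : (fun y => leftcomm y (x :: xs)) '' A = (fun y => leftcomm y xs) '' A' := by
      rw [hA'def, Set.image_image]
      rfl
    set E₀' : List (Subgroup H) := E₀ ++ [Lx] ++ E₀ ++ [Lx] ++ E₀ with hE₀'def
    have hE₀'mem : ∀ B ∈ E₀', B ∈ 𝓛 := by
      intro B hB
      simp only [hE₀'def, List.mem_append, List.mem_singleton] at hB
      rcases hB with ((((h|h)|h)|h)|h)
      · exact hE₀ B h
      · rw [h]; exact hLx
      · exact hE₀ B h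
      · rw [h]; exact hLx
      · exact hE₀ B h
    have hprodE₀' : prodS E₀' =
        prodS E₀ * (Lx : Set H) * prodS E₀ * (Lx : Set H) * prodS E₀ := by
      simp only [hE₀'def, prodS_append, prodS_singleton]
    have hone : (1 : H) ∈ prodS E₀ := one_mem_prodS E₀
    have hsub1 : A' ⊆ prodS E₀' := by
      rintro z ⟨y, hy, rfl⟩
      show ⁅y, x⁆ ∈ prodS E₀'
      rw [hprodE₀']
      have hz : ⁅y, x⁆ = y * x * y⁻¹ * x⁻¹ * 1 := by group
      rw [hz]
      exact Set.mul_mem_mul (Set.mul_mem_mul (Set.mul_mem_mul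
        (Set.mul_mem_mul (hA hy) hxLx) (hA' (Set.inv_mem_inv.mpr hy)))
        (Subgroup.inv_mem Lx hxLx)) hone
    have hsub2 : A'⁻¹ ⊆ prodS E₀' := by
      rintro z hz
      rw [Set.mem_inv] at hz
      obtain ⟨y, hy, hyz⟩ := hz
      have hyz' : ⁅y, x⁆ = z⁻¹ := hyz
      have hzval : z = ⁅y, x⁆⁻¹ := by rw [hyz', inv_inv]
      rw [hprodE₀', hzval]
      have hz2 : ⁅y, x⁆⁻¹ = 1 * x * y * x⁻¹ * y⁻¹ := by group
      rw [hz2]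
      exact Set.mul_mem_mul (Set.mul_mem_mul (Set.mul_mem_mul
        (Set.mul_mem_mul hone hxLx) (hA hy)) (Subgroup.inv_mem Lx hxLx))
        (hA' (Set.inv_mem_inv.mpr hy))
    obtain ⟨E, hE, h1, h2⟩ := ih (fun z hz => hxsX z (List.mem_cons_of_mem _ hz)) A' E₀'
      hE₀'mem hsub1 hsub2
    exact ⟨E, hE, by rw [hcomp]; exact h1, by rw [hcomp]; exact h2⟩

end Expand

section Main

variable {H : Type*} [Group H] [TopologicalSpace H] [IsTopologicalGroup H]

theorem main_thm
    [LocallyCompactSpace H] [Group.IsNilpotent H]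
    (hcg : ∃ C : Set H, IsCompact C ∧ Subgroup.closure C = ⊤)
    (𝓛 : Set (Subgroup H))
    (hdense : Dense ((Subgroup.closure (⋃ L ∈ 𝓛, (L : Set H)) : Subgroup H) : Set H)) :
    ∃ (n : ℕ) (Ls : Fin n → Subgroup H) (C : Set H), (∀ i, Ls i ∈ 𝓛) ∧ IsCompact C ∧
      C * (List.ofFn fun i => ((Ls i : Subgroup H) : Set H)).prod = Set.univ := by
  classical
  obtain ⟨Q, hQc, hQtop⟩ := hcg
  set X : Set H := ⋃ L ∈ 𝓛, (L : Set H) with hX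
  have hDtc : (Subgroup.closure X).topologicalClosure = ⊤ := by
    rw [SetLike.ext'_iff, Subgroup.topologicalClosure_coe, Subgroup.coe_top]
    exact hdense.closure_eq
  obtain ⟨nn, hnn⟩ := nilpotent_iff_lowerCentralSeries.mp ‹Group.IsNilpotent H›
  have hgamn : gam H nn = ⊥ := (relLCS_top_eq nn).trans hnn
  -- compact generating sets for the closed lower central series
  set Rset : ℕ → Set H := fun t => ⋃ s ∈ Finset.Ico t nn, commSet Q s with hRset
  have hRc : ∀ t, IsCompact (Rset t) :=
    fun t => (Finset.Ico t nn).finite_toSet.isCompact_biUnion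
      (fun s _ => commSet_isCompact hQc s)
  have hcommQ : ∀ s, commSet Q s ⊆ (gam H s : Set H) := by
    intro s z hz
    have := commSet_subset_relLCS Q s hz
    rwa [hQtop] at this
  have hRsub : ∀ t, Rset t ⊆ (gam H t : Set H) := by
    intro t z hz
    obtain ⟨s, hs, hzs⟩ := Set.mem_iUnion₂.mp hz
    have hst : t ≤ s := (Finset.mem_Ico.mp hs).1
    exact relLCS_le_of_le ⊤ hst (hcommQ s hzs)
  have hRgen : ∀ m t, t + m = nn → gam H t ≤ Subgroup.closure (Rset t) := by
    intro m
    induction m with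
    | zero =>
      intro t ht
      have : t = nn := by omega
      rw [this, hgamn]
      exact bot_le
    | succ m ih =>
      intro t ht
      have hlt : t < nn := by omega
      have hB := relLCS_le_commSet_sup Q t
      rw [hQtop] at hB
      refine hB.trans (sup_le ?_ ?_)
      · refine Subgroup.closure_mono ?_
        intro z hz
        exact Set.mem_iUnion₂.mpr ⟨t, Finset.mem_Ico.mpr ⟨le_refl t, hlt⟩, hz⟩
      · refine (ih (t+1) (by omega)).trans (Subgroup.closure_mono ?_)
        intro z hz
        obtain ⟨s, hs, hzs⟩ := Set.mem_iUnion₂.mp hz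
        have := Finset.mem_Ico.mp hs
        exact Set.mem_iUnion₂.mpr ⟨s, Finset.mem_Ico.mpr ⟨by omega, this.2⟩, hzs⟩
  -- the "move a subset of gbar s to the left" lemma
  have move : ∀ (E : List (Subgroup H)) (A : Set H) (s : ℕ), A ⊆ (gbar H s : Set H) →
      prodS E * A ⊆ A * prodS E * (gbar H (s+1) : Set H) := by
    intro E
    induction E with
    | nil =>
      intro A s hA
      rw [prodS_nil, one_mul]
      intro x hx
      exact ⟨x * 1, ⟨x, hx, 1, Set.mem_one.mpr rfl, rfl⟩, 1,
        Subgroup.one_mem _, by group⟩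
    | cons M r ih =>
      intro A s hA
      have swapMA : (M : Set H) * A ⊆ A * (M : Set H) * (gbar H (s+1) : Set H) := by
        rintro z ⟨f, hf, a, ha, rfl⟩
        refine ⟨a * f, Set.mul_mem_mul ha hf, ⁅f⁻¹, a⁻¹⁆,
          comm_mem_gbar' (Subgroup.inv_mem _ (hA ha)) f⁻¹, ?_⟩
        show a * f * ⁅f⁻¹, a⁻¹⁆ = f * a
        group
      have e1 : (gbar H (s+1) : Set H) * prodS r = prodS r * (gbar H (s+1) : Set H) :=
        (normal_swap (gbar_normal (s+1)) _).symm
      have NN : (gbar H (s+1) : Set H) * (gbar H (s+1) : Set H) = (gbar H (s+1) : Set H) :=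
        subgroup_coe_mul_self _
      calc prodS (M :: r) * A
          = (M : Set H) * (prodS r * A) := by rw [prodS_cons]; simp only [mul_assoc]
        _ ⊆ (M : Set H) * (A * prodS r * (gbar H (s+1) : Set H)) :=
            Set.mul_subset_mul_left (ih A s hA)
        _ = ((M : Set H) * A) * (prodS r * (gbar H (s+1) : Set H)) := by
            simp only [mul_assoc]
        _ ⊆ (A * (M : Set H) * (gbar H (s+1) : Set H)) *
              (prodS r * (gbar H (s+1) : Set H)) := Set.mul_subset_mul_right swapMA
        _ = A * (M : Set H) * ((gbar H (s+1) : Set H) * prodS r) *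
              (gbar H (s+1) : Set H) := by simp only [mul_assoc]
        _ = A * (M : Set H) * (prodS r * (gbar H (s+1) : Set H)) *
              (gbar H (s+1) : Set H) := by rw [e1]
        _ = A * ((M : Set H) * prodS r) *
              ((gbar H (s+1) : Set H) * (gbar H (s+1) : Set H)) := by
            simp only [mul_assoc]
        _ = A * prodS (M :: r) * (gbar H (s+1) : Set H) := by
            rw [NN, prodS_cons]
  -- master claim, by strong downward induction
  have master : ∀ m t, t + m = nn →
      ∃ (C : Set H) (ls : List (Subgroup H)), IsCompact C ∧ C ⊆ (gbar H t : Set H) ∧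
        (∀ L ∈ ls, L ∈ 𝓛) ∧ (gbar H t : Set H) ⊆ C * prodS ls := by
    intro m
    induction m using Nat.strong_induction_on with
    | _ m ihm =>
    intro t ht
    rcases m with _ | m
    · -- base case t = nn
      rw [show t = nn from by omega]
      have hcoe : (gbar H nn : Set H) = closure ({1} : Set H) := by
        show ((gam H nn).topologicalClosure : Set H) = _
        rw [hgamn]
        exact Subgroup.coe_topologicalClosure_bot H
      refine ⟨closure ({1} : Set H), [], isCompact_closure_one, by rw [hcoe], by simp, ?_⟩
      rw [hcoe, prodS_nil]
      exact subset_mul_one_right (Set.mem_one.mpr rfl)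
    · -- inductive step, t < nn
      have htlt : t < nn := by omega
      -- engine inputs
      have hGN : ∀ x ∈ gbar H t, ∀ y ∈ gbar H t, ⁅x, y⁆ ∈ gbar H (t+1) :=
        fun x hx y _ => comm_mem_gbar hx y
      have hRsubGt : Rset t ⊆ ((gbar H t : Subgroup H) : Set H) :=
        fun z hz => gam_le_gbar t (hRsub t hz)
      have hgenEng : ((gbar H t : Subgroup H) : Set H) ⊆
          closure ((Subgroup.closure (Rset t) : Subgroup H) : Set H) := by
        show ((gam H t).topologicalClosure : Set H) ⊆ _
        rw [Subgroup.topologicalClosure_coe]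
        refine closure_mono ?_
        exact SetLike.coe_subset_coe.mpr (hRgen (m+1) t ht)
      -- family of subgroups at this level
      set 𝓜 : Set (Subgroup H) :=
        {M | ∃ L ∈ 𝓛, ∃ xs : List H, (∀ z ∈ xs, z ∈ X) ∧ xs.length = t ∧
          M = Subgroup.closure ((fun y => leftcomm y xs) '' (L : Set H))} ∪
          {gbar H (t+1)} with h𝓜def
      have h𝓜G : ∀ M ∈ 𝓜, M ≤ gbar H t := by
        intro M hM
        rcases hM with ⟨L, _, xs, _, hlen, rfl⟩ | hM
        · refine (Subgroup.closure_le _).mpr ?_ |>.trans (gam_le_gbar t)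
          rintro z ⟨y, _, rfl⟩
          have := leftcomm_mem_gam (k := 0) (show y ∈ gam H 0 from Subgroup.mem_top y) xs
          rwa [zero_add, hlen] at this
        · rw [Set.mem_singleton_iff.mp hM]
          exact gbar_mono (Nat.le_succ t)
      have hdenseBody : relLCS (Subgroup.closure X) t ≤
          Subgroup.closure (⋃ M ∈ 𝓜, (M : Set H)) := by
        refine (relLCS_le_commSet_sup X t).trans (sup_le ?_ ?_)
        · refine Subgroup.closure_le _ |>.mpr ?_
          intro g hg
          obtain ⟨x₀, hx₀X, xs, hxs, hlen, rfl⟩ := commSet_eq_leftcomm X t hg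
          obtain ⟨L, hL, hx₀L⟩ := Set.mem_iUnion₂.mp hx₀X
          refine Subgroup.subset_closure (Set.mem_iUnion₂.mpr
            ⟨Subgroup.closure ((fun y => leftcomm y xs) '' (L : Set H)),
              Or.inl ⟨L, hL, xs, hxs, hlen, rfl⟩, ?_⟩)
          exact Subgroup.subset_closure (Set.mem_image_of_mem _ hx₀L)
        · have h1 : relLCS (Subgroup.closure X) (t+1) ≤ gam H (t+1) :=
            relLCS_mono le_top (t+1)
          refine h1.trans ((gam_le_gbar (t+1)).trans ?_)
          intro z hz
          exact Subgroup.subset_closure (Set.mem_iUnion₂.mpr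
            ⟨gbar H (t+1), Or.inr rfl, hz⟩)
      have hdenseEng : ((gbar H t : Subgroup H) : Set H) ⊆
          closure ((Subgroup.closure (⋃ M ∈ 𝓜, (M : Set H)) : Subgroup H) : Set H) := by
        show ((gam H t).topologicalClosure : Set H) ⊆ _
        rw [Subgroup.topologicalClosure_coe]
        have h2 : (gam H t : Set H) ⊆
            closure ((Subgroup.closure (⋃ M ∈ 𝓜, (M : Set H)) : Subgroup H) : Set H) := by
          intro z hz
          have h3 : z ∈ (relLCS (Subgroup.closure X) t).topologicalClosure :=
            gam_le_tc_relLCS hDtc t hz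
          rw [← Subgroup.topologicalClosure_coe]
          exact SetLike.coe_subset_coe.mpr
            (Subgroup.topologicalClosure_minimal _
              (hdenseBody.trans (Subgroup.le_topologicalClosure _))
              (Subgroup.isClosed_topologicalClosure _)) h3
        intro z hz
        have := closure_mono h2 hz
        rwa [closure_closure] at this
      obtain ⟨V', ms, hV'c, hV'G, hms𝓜, hmain⟩ :=
        engine (gbar H t) (gbar H (t+1)) (gbar_normal (t+1)) hGN (gbar_closed t)
          (Rset t) (hRc t) hRsubGt hgenEng 𝓜 h𝓜G hdenseEng
      -- convert each block into a pure 𝓛-product modulo gbar (t+1)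
      have conv : ∀ M ∈ ms, ∃ E : List (Subgroup H), (∀ B ∈ E, B ∈ 𝓛) ∧
          (M : Set H) ⊆ prodS E * ((gbar H (t+1) : Subgroup H) : Set H) := by
        intro M hM
        rcases hms𝓜 M hM with ⟨L, hL, xs, hxs, hlen, rfl⟩ | hMg
        · obtain ⟨E, hE, h1, _⟩ := Aexpand 𝓛 xs hxs (L : Set H) [L]
            (by intro B hB; rw [List.mem_singleton.mp hB]; exact hL)
            (by rw [prodS_singleton])
            (by rw [prodS_singleton, subgroup_coe_inv])
          refine ⟨E, hE, ?_⟩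
          intro g hg
          obtain ⟨y, hyL, e, he, rfl⟩ := mem_closure_leftcomm L xs hg
          refine Set.mul_mem_mul (h1 (Set.mem_image_of_mem _ hyL)) ?_
          refine gam_le_gbar (t+1) ?_
          rwa [hlen] at he
        · rw [Set.mem_singleton_iff.mp hMg]
          exact ⟨[], by simp, by rw [prodS_nil]; exact subset_one_mul_left (Set.mem_one.mpr rfl)⟩
      have NNt : ((gbar H (t+1) : Subgroup H) : Set H) * ((gbar H (t+1) : Subgroup H) : Set H)
          = ((gbar H (t+1) : Subgroup H) : Set H) := subgroup_coe_mul_self _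
      have convAll : ∀ l : List (Subgroup H), (∀ M ∈ l, M ∈ ms) →
          ∃ EE : List (Subgroup H), (∀ B ∈ EE, B ∈ 𝓛) ∧
            prodS l ⊆ prodS EE * ((gbar H (t+1) : Subgroup H) : Set H) := by
        intro l
        induction l with
        | nil =>
          intro _
          exact ⟨[], by simp, by
            rw [prodS_nil]
            exact subset_mul_one_right (Subgroup.one_mem _)⟩
        | cons M r ih =>
          intro hmem
          obtain ⟨EE, hEE, hsub⟩ := ih (fun M' hM' => hmem M' (List.mem_cons_of_mem _ hM'))
          obtain ⟨E, hE, hsubM⟩ := conv M (hmem M (List.mem_cons_self (a := M) (l := r)))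
          refine ⟨E ++ EE, ?_, ?_⟩
          · intro B hB
            rcases List.mem_append.mp hB with h | h
            · exact hE B h
            · exact hEE B h
          · have e1 : ((gbar H (t+1) : Subgroup H) : Set H) * prodS EE
                = prodS EE * ((gbar H (t+1) : Subgroup H) : Set H) :=
              (normal_swap (gbar_normal (t+1)) _).symm
            calc prodS (M :: r)
                = (M : Set H) * prodS r := prodS_cons M r
              _ ⊆ (prodS E * ((gbar H (t+1) : Subgroup H) : Set H)) *
                    (prodS EE * ((gbar H (t+1) : Subgroup H) : Set H)) :=
                  Set.mul_subset_mul hsubM hsub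
              _ = prodS E * (((gbar H (t+1) : Subgroup H) : Set H) * prodS EE) *
                    ((gbar H (t+1) : Subgroup H) : Set H) := by simp only [mul_assoc]
              _ = prodS E * (prodS EE * ((gbar H (t+1) : Subgroup H) : Set H)) *
                    ((gbar H (t+1) : Subgroup H) : Set H) := by rw [e1]
              _ = prodS (E ++ EE) *
                    (((gbar H (t+1) : Subgroup H) : Set H) *
                      ((gbar H (t+1) : Subgroup H) : Set H)) := by
                  rw [prodS_append]; simp only [mul_assoc]
              _ = prodS (E ++ EE) * ((gbar H (t+1) : Subgroup H) : Set H) := by rw [NNt]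
      obtain ⟨EE, hEE𝓛, hEEsub⟩ := convAll ms (fun M hM => hM)
      have main2 : ((gbar H t : Subgroup H) : Set H) ⊆
          V' * prodS EE * ((gbar H (t+1) : Subgroup H) : Set H) := by
        calc ((gbar H t : Subgroup H) : Set H)
            ⊆ V' * prodS ms * ((gbar H (t+1) : Subgroup H) : Set H) := hmain
          _ ⊆ V' * (prodS EE * ((gbar H (t+1) : Subgroup H) : Set H)) *
                ((gbar H (t+1) : Subgroup H) : Set H) :=
              Set.mul_subset_mul_right (Set.mul_subset_mul_left hEEsub)
          _ = V' * prodS EE * (((gbar H (t+1) : Subgroup H) : Set H) *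
                ((gbar H (t+1) : Subgroup H) : Set H)) := by simp only [mul_assoc]
          _ = V' * prodS EE * ((gbar H (t+1) : Subgroup H) : Set H) := by rw [NNt]
      -- inner iteration absorbing ever deeper closed central series terms
      have inner : ∀ j s, s + j = nn → t + 1 ≤ s → ∀ C : Set H, IsCompact C →
          C ⊆ (gbar H t : Set H) → ∀ W : List (Subgroup H), (∀ L ∈ W, L ∈ 𝓛) →
          ((gbar H t : Subgroup H) : Set H) ⊆
            C * prodS EE * ((gbar H s : Subgroup H) : Set H) * prodS W →
          ∃ (C' : Set H) (ls : List (Subgroup H)), IsCompact C' ∧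
            C' ⊆ (gbar H t : Set H) ∧ (∀ L ∈ ls, L ∈ 𝓛) ∧
            ((gbar H t : Subgroup H) : Set H) ⊆ C' * prodS ls := by
        intro j
        induction j with
        | zero =>
          intro s hs hts C hC hCG W hW hsub
          rw [show s = nn from by omega] at hsub
          have hZ : ((gbar H nn : Subgroup H) : Set H) = closure ({1} : Set H) := by
            show ((gam H nn).topologicalClosure : Set H) = _
            rw [hgamn]
            exact Subgroup.coe_topologicalClosure_bot H
          have hZc : IsCompact ((gbar H nn : Subgroup H) : Set H) := by
            rw [hZ]; exact isCompact_closure_one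
          have e1 : prodS EE * ((gbar H nn : Subgroup H) : Set H)
              = ((gbar H nn : Subgroup H) : Set H) * prodS EE :=
            normal_swap (gbar_normal nn) _
          refine ⟨C * ((gbar H nn : Subgroup H) : Set H), EE ++ W, hC.mul hZc, ?_, ?_, ?_⟩
          · intro z hz
            obtain ⟨c, hc, w, hw, rfl⟩ := hz
            exact mul_mem (hCG hc) (gbar_mono (by omega) hw)
          · intro B hB
            rcases List.mem_append.mp hB with h | h
            · exact hEE𝓛 B h
            · exact hW B h
          · calc ((gbar H t : Subgroup H) : Set H)
                ⊆ C * prodS EE * ((gbar H nn : Subgroup H) : Set H) * prodS W := hsub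
              _ = C * (prodS EE * ((gbar H nn : Subgroup H) : Set H)) * prodS W := by
                  simp only [mul_assoc]
              _ = C * (((gbar H nn : Subgroup H) : Set H) * prodS EE) * prodS W := by
                  rw [e1]
              _ = (C * ((gbar H nn : Subgroup H) : Set H)) * prodS (EE ++ W) := by
                  rw [prodS_append]; simp only [mul_assoc]
        | succ j ihj =>
          intro s hs hts C hC hCG W hW hsub
          have hjm : j + 1 < m + 1 := by omega
          obtain ⟨Cs, Ws, hCsc, hCsG, hWs𝓛, hsubs⟩ := ihm (j+1) hjm s (by omega)
          have hmove : prodS EE * Cs ⊆ Cs * prodS EE * ((gbar H (s+1) : Subgroup H) : Set H) :=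
            move EE Cs s hCsG
          have hnext : ((gbar H t : Subgroup H) : Set H) ⊆
              (C * Cs) * prodS EE * ((gbar H (s+1) : Subgroup H) : Set H) *
                prodS (Ws ++ W) := by
            calc ((gbar H t : Subgroup H) : Set H)
                ⊆ C * prodS EE * ((gbar H s : Subgroup H) : Set H) * prodS W := hsub
              _ ⊆ C * prodS EE * (Cs * prodS Ws) * prodS W :=
                  Set.mul_subset_mul_right (Set.mul_subset_mul_left hsubs)
              _ = C * (prodS EE * Cs) * (prodS Ws * prodS W) := by simp only [mul_assoc]
              _ ⊆ C * (Cs * prodS EE * ((gbar H (s+1) : Subgroup H) : Set H)) *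
                    (prodS Ws * prodS W) := Set.mul_subset_mul_right
                  (Set.mul_subset_mul_left hmove)
              _ = (C * Cs) * prodS EE * ((gbar H (s+1) : Subgroup H) : Set H) *
                    prodS (Ws ++ W) := by rw [prodS_append]; simp only [mul_assoc]
          refine ihj (s+1) (by omega) (by omega) (C * Cs) (hC.mul hCsc) ?_ (Ws ++ W) ?_ hnext
          · intro z hz
            obtain ⟨c, hc, w, hw, rfl⟩ := hz
            exact mul_mem (hCG hc) (gbar_mono (by omega : t ≤ s) (hCsG hw))
          · intro B hB
            rcases List.mem_append.mp hB with h | h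
            · exact hWs𝓛 B h
            · exact hW B h
      -- start the inner iteration
      have hstart : ((gbar H t : Subgroup H) : Set H) ⊆
          V' * prodS EE * ((gbar H (t+1) : Subgroup H) : Set H) * prodS [] := by
        rw [prodS_nil, mul_one]
        exact main2
      exact inner m (t+1) (by omega) (by omega) V' hV'c hV'G [] (by simp) hstart
  -- conclude
  obtain ⟨C, ls, hCc, _, hls, hsub⟩ := master nn 0 (by omega)
  have huniv : ((gbar H 0 : Subgroup H) : Set H) = Set.univ := by
    show (((⊤ : Subgroup H)).topologicalClosure : Set H) = _
    rw [topClosure_top, Subgroup.coe_top]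
  refine ⟨ls.length, ls.get, C, ?_, hCc, ?_⟩
  · intro i
    exact hls _ (List.get_mem ls i)
  · have hofn : (List.ofFn fun i => ((ls.get i : Subgroup H) : Set H)) =
        ls.map (fun M : Subgroup H => (M : Set H)) :=
      (List.ofFn_comp' ls.get (fun M : Subgroup H => (M : Set H))).trans (by rw [List.ofFn_get])
    rw [hofn]
    apply Set.eq_univ_of_univ_subset
    rw [← huniv]
    exact hsub

end Main

/-- In a compactly generated, locally compact, nilpotent group `H`, if a
family `𝓛` of closed subgroups generates a dense subgroup, then `H` is a finite product
`C L₁ ⋯ Lₙ` with `C` compact and `Lᵢ ∈ 𝓛`. -/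
theorem eq_compact_mul_finite_prod_of_dense_closure
    {H : Type*} [Group H] [TopologicalSpace H] [IsTopologicalGroup H]
    [LocallyCompactSpace H] [SecondCountableTopology H] [Group.IsNilpotent H]
    (hcg : ∃ C : Set H, IsCompact C ∧ Subgroup.closure C = ⊤)
    (𝓛 : Set (Subgroup H)) (hclosed : ∀ L ∈ 𝓛, IsClosed ((L : Subgroup H) : Set H))
    (hdense : Dense ((Subgroup.closure (⋃ L ∈ 𝓛, (L : Set H)) : Subgroup H) : Set H)) :
    ∃ (n : ℕ) (Ls : Fin n → Subgroup H) (C : Set H), (∀ i, Ls i ∈ 𝓛) ∧ IsCompact C ∧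
      C * (List.ofFn fun i => ((Ls i : Subgroup H) : Set H)).prod = Set.univ := by
  exact main_thm hcg 𝓛 hdense
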